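/- Let κ ∈ C_{-1}(0,∞) be represented as κ(t) = h_p(t) κ_1(t) with p > 0 and κ_1 continuous on [0,∞), and let (a_j)_{j≥0} be complex numbers such that the power series Σ_{j=0}^∞ a_j z^j has a non-zero radius of convergence. Then the convolution series Σ_κ(t) = Σ_{j=0}^∞ a_j κ^{<j+1>}(t) converges for every t > 0 and defines a function in C_{-1}(0,∞); moreover, with α = min{p, 1}, the series Σ_{j=0}^∞ a_j t^{1−α} κ^{<j+1>}(t) converges uniformly on [0, T] for every T > 0. -/

import Mathlib

noncomputable section

/-- Laplace convolution of complex-valued functions on `(0,∞)`. -/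
def convC (f g : ℝ → ℂ) : ℝ → ℂ := fun t => ∫ τ in (0:ℝ)..t, f (t - τ) * g τ

/-- The space `C_{-1}(0,∞)` of complex-valued functions: `f(t) = t^q f₁(t)` with
`q > -1` and `f₁` continuous on `[0,∞)`. -/
def Cm1C (f : ℝ → ℂ) : Prop :=
  ∃ q : ℝ, -1 < q ∧ ∃ f₁ : ℝ → ℂ, ContinuousOn f₁ (Set.Ici 0) ∧
    ∀ t : ℝ, 0 < t → f t = ((t ^ q : ℝ) : ℂ) * f₁ t

/-- Convolution powers: `g^{<1>} = g`, `g^{<j+1>} = g * g^{<j>}` (and `g^{<0>} = 1`). -/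
def convPowC (g : ℝ → ℂ) : ℕ → ℝ → ℂ
  | 0 => fun _ => 1
  | 1 => g
  | (j + 2) => convC g (convPowC g (j + 1))

/-- `h_p(t) = t^(p-1)/Γ(p)` as a complex-valued function. -/
def hkerC (p : ℝ) : ℝ → ℂ := fun t => ((t ^ (p - 1) / Real.Gamma p : ℝ) : ℂ)



open MeasureTheory intervalIntegral Set Filter Topology


lemma restrict_eq01 : (volume.restrict (Set.uIoc (0:ℝ) 1)) = volume.restrict (Set.Ioo (0:ℝ) 1) := by
  rw [Set.uIoc_of_le zero_le_one]
  exact (Measure.restrict_congr_set Ioo_ae_eq_Ioc).symm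

lemma aer_Ioo01 {P : ℝ → Prop} (h : ∀ σ ∈ Set.Ioo (0:ℝ) 1, P σ) :
    ∀ᵐ σ ∂(volume.restrict (Set.uIoc (0:ℝ) 1)), P σ := by
  rw [restrict_eq01]
  exact (ae_restrict_iff' measurableSet_Ioo).2 (ae_of_all _ h)

lemma ae_Ioo01 {P : ℝ → Prop} (h : ∀ σ ∈ Set.Ioo (0:ℝ) 1, P σ) :
    ∀ᵐ σ : ℝ, σ ∈ Set.uIoc (0:ℝ) 1 → P σ := by
  have h1 : ∀ᵐ σ : ℝ, σ ≠ 1 := by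
    rw [MeasureTheory.ae_iff]
    simpa using Real.volume_singleton (a := 1)
  filter_upwards [h1] with σ hσ hmem
  rw [Set.uIoc_of_le zero_le_one] at hmem
  exact h σ ⟨hmem.1, lt_of_le_of_ne hmem.2 hσ⟩

lemma asm_Ioo01 {E : Type*} [NormedAddCommGroup E] {f : ℝ → E}
    (hf : ContinuousOn f (Set.Ioo 0 1)) :
    AEStronglyMeasurable f (volume.restrict (Set.uIoc (0:ℝ) 1)) := by
  rw [restrict_eq01]
  exact hf.aestronglyMeasurable measurableSet_Ioo

lemma cont_rpow1 {p : ℝ} : ContinuousOn (fun σ : ℝ => σ ^ (p-1)) (Set.Ioo 0 1) :=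
  fun x hx => (Real.continuousAt_rpow_const x (p-1) (Or.inl hx.1.ne')).continuousWithinAt

lemma cont_rpow2 {p : ℝ} : ContinuousOn (fun σ : ℝ => (1-σ) ^ (p-1)) (Set.Ioo 0 1) := by
  intro x hx
  have : (1:ℝ) - x ≠ 0 := by have := hx.2; intro h; linarith [sub_eq_zero.mp h]
  exact ((Real.continuousAt_rpow_const (1-x) (p-1) (Or.inl this)).comp
    ((continuous_const.sub continuous_id).continuousAt)).continuousWithinAt

/-- beta-type integrand with both endpoint singularities is interval integrable -/
lemma D_intble {p : ℝ} (hp : 0 < p) :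
    IntervalIntegrable (fun σ : ℝ => σ ^ (p-1) * (1-σ) ^ (p-1)) volume 0 1 := by
  have h := (Complex.betaIntegral_convergent (u := (p:ℂ)) (v := (p:ℂ))
    (by simpa using hp) (by simpa using hp)).norm
  refine h.mono_fun' (g := fun σ => ‖(σ:ℂ) ^ ((p:ℂ)-1) * (1-(σ:ℂ)) ^ ((p:ℂ)-1)‖) ?_ ?_
  · exact asm_Ioo01 (cont_rpow1.mul cont_rpow2)
  · refine aer_Ioo01 (fun σ hσ => ?_)
    have h1 : (0:ℝ) < σ := hσ.1
    have h2 : (0:ℝ) < 1 - σ := by linarith [hσ.2]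
    simp only [norm_mul]
    have e1 : ((σ:ℂ)) ^ ((p:ℂ)-1) = ((σ:ℂ)) ^ (((p-1:ℝ)):ℂ) := by push_cast; ring_nf
    have e2 : ((1-(σ:ℂ))) ^ ((p:ℂ)-1) = ((((1-σ:ℝ)):ℂ)) ^ (((p-1:ℝ)):ℂ) := by push_cast; ring_nf
    rw [e1, e2, Complex.norm_cpow_eq_rpow_re_of_pos h1, Complex.norm_cpow_eq_rpow_re_of_pos h2]
    simp [Real.norm_eq_abs, abs_mul, abs_of_nonneg (Real.rpow_nonneg h1.le _),
      abs_of_nonneg (Real.rpow_nonneg h2.le _)]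

open MeasureTheory intervalIntegral Set Filter Topology

/-- The beta-type integrals appearing in the recursion. -/
def Bint (p : ℝ) (j : ℕ) : ℝ := ∫ σ in (0:ℝ)..1, (1-σ) ^ (p-1) * σ ^ (((j:ℝ)+1)*p-1)

lemma F_le_D {p : ℝ} (hp : 0 < p) (j : ℕ) {σ : ℝ} (hσ : σ ∈ Set.Ioo (0:ℝ) 1) :
    (1-σ) ^ (p-1) * σ ^ (((j:ℝ)+1)*p-1) ≤ σ ^ (p-1) * (1-σ) ^ (p-1) := by
  rw [mul_comm]
  have h1 : (0:ℝ) < σ := hσ.1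
  have h2 : (0:ℝ) ≤ 1 - σ := by linarith [hσ.2]
  refine mul_le_mul_of_nonneg_right ?_ (Real.rpow_nonneg h2 _)
  exact Real.rpow_le_rpow_of_exponent_ge h1 hσ.2.le
    (by nlinarith [Nat.cast_nonneg (α := ℝ) j])

lemma contF {p : ℝ} (j : ℕ) :
    ContinuousOn (fun σ : ℝ => (1-σ) ^ (p-1) * σ ^ (((j:ℝ)+1)*p-1)) (Set.Ioo 0 1) := by
  refine cont_rpow2.mul ?_
  exact fun x hx => (Real.continuousAt_rpow_const x _ (Or.inl hx.1.ne')).continuousWithinAt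

lemma F_intble {p : ℝ} (hp : 0 < p) (j : ℕ) :
    IntervalIntegrable (fun σ : ℝ => (1-σ) ^ (p-1) * σ ^ (((j:ℝ)+1)*p-1)) volume 0 1 := by
  refine (D_intble hp).mono_fun' (asm_Ioo01 (contF j)) ?_
  refine aer_Ioo01 (fun σ hσ => ?_)
  have h2 : (0:ℝ) ≤ 1 - σ := by linarith [hσ.2]
  have h1 : (0:ℝ) < σ := hσ.1
  simp only [Real.norm_eq_abs, abs_of_nonneg (mul_nonneg (Real.rpow_nonneg h2 _) (Real.rpow_nonneg h1.le _))]
  exact F_le_D hp j hσ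

lemma B_nonneg {p : ℝ} (j : ℕ) : 0 ≤ Bint p j := by
  refine intervalIntegral.integral_nonneg zero_le_one (fun σ hσ => ?_)
  have h2 : (0:ℝ) ≤ 1 - σ := by linarith [hσ.2]
  exact mul_nonneg (Real.rpow_nonneg h2 _) (Real.rpow_nonneg hσ.1 _)

lemma B_tendsto {p : ℝ} (hp : 0 < p) : Tendsto (Bint p) atTop (𝓝 0) := by
  have h0 : (0:ℝ) = ∫ σ in (0:ℝ)..1, (0:ℝ) := by simp
  rw [h0]
  refine intervalIntegral.tendsto_integral_filter_of_dominated_convergence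
    (fun σ => σ ^ (p-1) * (1-σ) ^ (p-1)) ?_ ?_ (D_intble hp) ?_
  · exact Eventually.of_forall (fun j => asm_Ioo01 (contF j))
  · refine Eventually.of_forall (fun j => ae_Ioo01 (fun σ hσ => ?_))
    have h2 : (0:ℝ) ≤ 1 - σ := by linarith [hσ.2]
    have h1 : (0:ℝ) < σ := hσ.1
    simp only [Real.norm_eq_abs, abs_of_nonneg (mul_nonneg (Real.rpow_nonneg h2 _) (Real.rpow_nonneg h1.le _))]
    exact F_le_D hp j hσ
  · refine ae_Ioo01 (fun σ hσ => ?_)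
    have h1 : (0:ℝ) < σ := hσ.1
    have key : Tendsto (fun j : ℕ => σ ^ (((j:ℝ)+1)*p-1)) atTop (𝓝 0) := by
      have : ∀ j : ℕ, σ ^ (((j:ℝ)+1)*p-1) = σ ^ (p-1) * (σ ^ p) ^ j := by
        intro j
        rw [← Real.rpow_natCast (σ ^ p) j, ← Real.rpow_mul h1.le, ← Real.rpow_add h1]
        ring_nf
      simp only [this]
      rw [show (0:ℝ) = σ ^ (p-1) * 0 by ring]
      exact (tendsto_pow_atTop_nhds_zero_of_lt_one (by positivity)
        (Real.rpow_lt_one h1.le hσ.2 hp)).const_mul _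
    simpa using key.const_mul ((1-σ) ^ (p-1))

/-- Rescaled convolution powers. -/
def Vop (p : ℝ) (u : ℝ → ℂ) : ℕ → ℝ → ℂ
  | 0 => u
  | (j+1) => fun t => ∫ σ in (0:ℝ)..1,
      (((1-σ) ^ (p-1) * σ ^ (((j:ℝ)+1)*p-1) : ℝ) : ℂ) * (u (t*(1-σ)) * Vop p u j (t*σ))

lemma V_cont {p : ℝ} (hp : 0 < p) {u : ℝ → ℂ} (hu : ContinuousOn u (Set.Ici 0)) :
    ∀ j, ContinuousOn (Vop p u j) (Set.Ici 0) := by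
  intro j
  induction j with
  | zero => exact hu
  | succ j ih =>
    intro t₀ ht₀
    have ht₀' : (0:ℝ) ≤ t₀ := ht₀
    -- bounds on the compact interval [0, t₀+1]
    obtain ⟨Mu, hMu⟩ := (isCompact_Icc (a := (0:ℝ)) (b := t₀+1)).exists_bound_of_continuousOn
      (hu.mono (fun x hx => hx.1))
    obtain ⟨Mv, hMv⟩ := (isCompact_Icc (a := (0:ℝ)) (b := t₀+1)).exists_bound_of_continuousOn
      ((ih).mono (fun x hx => hx.1))
    have hMu0 : 0 ≤ Mu := le_trans (norm_nonneg _) (hMu 0 ⟨le_refl 0, by linarith⟩)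
    have hMv0 : 0 ≤ Mv := le_trans (norm_nonneg _) (hMv 0 ⟨le_refl 0, by linarith⟩)
    have hsub : ∀ {t : ℝ}, t ∈ Set.Icc (0:ℝ) (t₀+1) → ∀ {σ : ℝ}, σ ∈ Set.Icc (0:ℝ) 1 →
        t * σ ∈ Set.Icc (0:ℝ) (t₀+1) := by
      intro t ht σ hσ
      constructor
      · exact mul_nonneg ht.1 hσ.1
      · calc t * σ ≤ t * 1 := by
              exact mul_le_mul_of_nonneg_left hσ.2 ht.1
          _ ≤ t₀ + 1 := by simpa using ht.2
    have key : ContinuousWithinAt (Vop p u (j+1)) (Set.Icc 0 (t₀+1)) t₀ := by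
      refine intervalIntegral.continuousWithinAt_of_dominated_interval
        (bound := fun σ => (1-σ) ^ (p-1) * σ ^ (((j:ℝ)+1)*p-1) * (Mu * Mv)) ?_ ?_
        ((F_intble hp j).mul_const _) ?_
      · refine eventually_nhdsWithin_of_forall (fun t ht => asm_Ioo01 ?_)
        refine (Complex.continuous_ofReal.comp_continuousOn (contF j)).mul ?_
        have h1 : ContinuousOn (fun σ : ℝ => u (t*(1-σ))) (Set.Ioo 0 1) := by
          refine hu.comp (by fun_prop) ?_
          intro σ hσ
          exact mul_nonneg ht.1 (by linarith [hσ.2] : (0:ℝ) ≤ 1 - σ)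
        have h2 : ContinuousOn (fun σ : ℝ => Vop p u j (t*σ)) (Set.Ioo 0 1) := by
          refine ih.comp (by fun_prop) ?_
          intro σ hσ
          exact mul_nonneg ht.1 hσ.1.le
        exact h1.mul h2
      · refine eventually_nhdsWithin_of_forall (fun t ht => ae_Ioo01 (fun σ hσ => ?_))
        have h2 : (0:ℝ) ≤ 1 - σ := by linarith [hσ.2]
        have hb1 : ‖u (t*(1-σ))‖ ≤ Mu := hMu _ (hsub ht ⟨h2, by linarith [hσ.1.le]⟩)
        have hb2 : ‖Vop p u j (t*σ)‖ ≤ Mv := hMv _ (hsub ht ⟨hσ.1.le, hσ.2.le⟩)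
        rw [norm_mul, norm_mul]
        have : ‖(((1-σ) ^ (p-1) * σ ^ (((j:ℝ)+1)*p-1) : ℝ) : ℂ)‖
            = (1-σ) ^ (p-1) * σ ^ (((j:ℝ)+1)*p-1) := by
          rw [Complex.norm_real, Real.norm_eq_abs,
            abs_of_nonneg (mul_nonneg (Real.rpow_nonneg h2 _) (Real.rpow_nonneg hσ.1.le _))]
        rw [this]
        refine mul_le_mul_of_nonneg_left ?_
          (mul_nonneg (Real.rpow_nonneg h2 _) (Real.rpow_nonneg hσ.1.le _))
        exact mul_le_mul hb1 hb2 (norm_nonneg _) hMu0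
      · refine ae_Ioo01 (fun σ hσ => ?_)
        have h2 : (0:ℝ) ≤ 1 - σ := by linarith [hσ.2]
        refine ContinuousWithinAt.mul continuousWithinAt_const ?_
        have c1 : ContinuousWithinAt (fun t : ℝ => u (t*(1-σ))) (Set.Icc 0 (t₀+1)) t₀ := by
          refine ContinuousWithinAt.comp (g := u) (f := fun t : ℝ => t*(1-σ))
            (hu ((t₀*(1-σ))) (mul_nonneg ht₀' h2))
            ((continuous_mul_right _).continuousWithinAt) ?_
          intro t ht
          exact mul_nonneg ht.1 h2
        have c2 : ContinuousWithinAt (fun t : ℝ => Vop p u j (t*σ)) (Set.Icc 0 (t₀+1)) t₀ := by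
          refine ContinuousWithinAt.comp (g := Vop p u j) (f := fun t : ℝ => t*σ)
            (ih ((t₀*σ)) (mul_nonneg ht₀' hσ.1.le))
            ((continuous_mul_right _).continuousWithinAt) ?_
          intro t ht
          exact mul_nonneg ht.1 hσ.1.le
        exact c1.mul c2
    refine key.mono_of_mem_nhdsWithin ?_
    rw [mem_nhdsWithin]
    exact ⟨Set.Iio (t₀+1), isOpen_Iio, by simpa using lt_add_one t₀,
      fun x hx => ⟨hx.2, le_of_lt hx.1⟩⟩

lemma V_bound {p : ℝ} (hp : 0 < p) {u : ℝ → ℂ} (hu : ContinuousOn u (Set.Ici 0))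
    {T M : ℝ} (hT : 0 ≤ T) (hM : 0 ≤ M) (hMu : ∀ s ∈ Set.Icc (0:ℝ) T, ‖u s‖ ≤ M) :
    ∀ j, ∀ t ∈ Set.Icc (0:ℝ) T,
      ‖Vop p u j t‖ ≤ M^(j+1) * ∏ i ∈ Finset.range j, Bint p i := by
  intro j
  induction j with
  | zero => intro t ht; simpa [Vop] using hMu t ht
  | succ j ih =>
    intro t ht
    have hsub : ∀ {σ : ℝ}, σ ∈ Set.Icc (0:ℝ) 1 → t * σ ∈ Set.Icc (0:ℝ) T := by
      intro σ hσ
      exact ⟨mul_nonneg ht.1 hσ.1, le_trans (by nlinarith [ht.1, hσ.2] : t*σ ≤ t) ht.2⟩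
    have prodnn : (0:ℝ) ≤ M^(j+1) * ∏ i ∈ Finset.range j, Bint p i :=
      mul_nonneg (pow_nonneg hM _) (Finset.prod_nonneg (fun i _ => B_nonneg i))
    have step : ‖Vop p u (j+1) t‖ ≤
        |∫ σ in (0:ℝ)..1, (1-σ) ^ (p-1) * σ ^ (((j:ℝ)+1)*p-1)
          * (M * (M^(j+1) * ∏ i ∈ Finset.range j, Bint p i))| := by
      refine intervalIntegral.norm_integral_le_abs_of_norm_le ?_ ((F_intble hp j).mul_const _)
      refine aer_Ioo01 (fun σ hσ => ?_)
      have h2 : (0:ℝ) ≤ 1 - σ := by linarith [hσ.2]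
      rw [norm_mul, norm_mul]
      have : ‖(((1-σ) ^ (p-1) * σ ^ (((j:ℝ)+1)*p-1) : ℝ) : ℂ)‖
          = (1-σ) ^ (p-1) * σ ^ (((j:ℝ)+1)*p-1) := by
        rw [Complex.norm_real, Real.norm_eq_abs,
          abs_of_nonneg (mul_nonneg (Real.rpow_nonneg h2 _) (Real.rpow_nonneg hσ.1.le _))]
      rw [this]
      refine mul_le_mul_of_nonneg_left ?_
        (mul_nonneg (Real.rpow_nonneg h2 _) (Real.rpow_nonneg hσ.1.le _))
      have hb1 : ‖u (t*(1-σ))‖ ≤ M := hMu _ (hsub ⟨h2, by linarith [hσ.1.le]⟩)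
      have hb2 := ih (t*σ) (hsub ⟨hσ.1.le, hσ.2.le⟩)
      exact mul_le_mul hb1 hb2 (norm_nonneg _) hM
    rw [intervalIntegral.integral_mul_const, abs_mul] at step
    refine le_trans step ?_
    have hBj : |∫ σ in (0:ℝ)..1, (1-σ) ^ (p-1) * σ ^ (((j:ℝ)+1)*p-1)| = Bint p j := by
      show |Bint p j| = Bint p j
      exact abs_of_nonneg (B_nonneg j)
    rw [hBj, abs_of_nonneg (mul_nonneg hM prodnn)]
    rw [Finset.prod_range_succ]
    ring_nf
    exact le_of_eq (by ring)

lemma V_identity {p : ℝ} (hp : 0 < p) {κ u : ℝ → ℂ}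
    (hκu : ∀ t : ℝ, 0 < t → κ t = ((t ^ (p-1) : ℝ) : ℂ) * u t) :
    ∀ j, ∀ t : ℝ, 0 < t →
      convPowC κ (j+1) t = ((t ^ (((j:ℝ)+1)*p - 1) : ℝ) : ℂ) * Vop p u j t := by
  intro j
  induction j with
  | zero =>
    intro t ht
    have := hκu t ht
    simpa [convPowC, Vop] using this
  | succ j ih =>
    intro t ht
    have hL : convPowC κ (j+2) t
        = t • ∫ σ in (0:ℝ)..1, κ (t - σ*t) * convPowC κ (j+1) (σ*t) := by
      show (∫ τ in (0:ℝ)..t, κ (t-τ) * convPowC κ (j+1) τ) = _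
      have := intervalIntegral.smul_integral_comp_mul_right (a := (0:ℝ)) (b := 1)
        (fun τ => κ (t-τ) * convPowC κ (j+1) τ) t
      simpa using this.symm
    rw [hL]
    have hV : Vop p u (j+1) t = ∫ σ in (0:ℝ)..1,
        (((1-σ) ^ (p-1) * σ ^ (((j:ℝ)+1)*p-1) : ℝ) : ℂ) * (u (t*(1-σ)) * Vop p u j (t*σ)) := rfl
    rw [hV, ← intervalIntegral.integral_const_mul]
    rw [show (t • ∫ σ in (0:ℝ)..1, κ (t - σ*t) * convPowC κ (j+1) (σ*t))
        = ∫ σ in (0:ℝ)..1, (t:ℂ) * (κ (t - σ*t) * convPowC κ (j+1) (σ*t)) by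
      rw [← intervalIntegral.integral_smul]
      refine intervalIntegral.integral_congr (fun σ _ => ?_)
      simp [Complex.real_smul]]
    refine intervalIntegral.integral_congr_ae (ae_Ioo01 (fun σ hσ => ?_))
    have h1σ : (0:ℝ) < 1 - σ := by linarith [hσ.2]
    have ht1 : (0:ℝ) < t*(1-σ) := mul_pos ht h1σ
    have ht2 : (0:ℝ) < t*σ := mul_pos ht hσ.1
    rw [show t - σ*t = t*(1-σ) by ring, show σ*t = t*σ by ring]
    rw [hκu _ ht1, ih (t*σ) ht2]
    have r1 : (t*(1-σ)) ^ (p-1) = t^(p-1) * (1-σ)^(p-1) := Real.mul_rpow ht.le h1σ.le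
    have r2 : (t*σ) ^ (((j:ℝ)+1)*p - 1)
        = t ^ (((j:ℝ)+1)*p - 1) * σ ^ (((j:ℝ)+1)*p - 1) := Real.mul_rpow ht.le hσ.1.le
    have r3 : t * (t^(p-1) * t^(((j:ℝ)+1)*p - 1)) = t ^ (((j:ℝ)+1+1)*p - 1) := by
      nth_rewrite 1 [← Real.rpow_one t]
      rw [← Real.rpow_add ht, ← Real.rpow_add ht]
      congr 1
      ring
    have c3 : (t:ℂ) * (((t^(p-1) : ℝ):ℂ) * ((t^(((j:ℝ)+1)*p - 1) : ℝ):ℂ))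
        = ((t ^ (((j:ℝ)+1+1)*p - 1) : ℝ):ℂ) := by
      rw [← Complex.ofReal_mul, show (t:ℂ) = ((t:ℝ):ℂ) from rfl, ← Complex.ofReal_mul]
      exact congrArg _ r3
    rw [r1, r2]
    push_cast
    rw [← c3]
    ring

lemma master_summable {p : ℝ} (hp : 0 < p) {x M : ℝ} (hx : 0 ≤ x) (hM : 0 ≤ M) :
    Summable (fun j : ℕ => x^j * (M^(j+1) * ∏ i ∈ Finset.range j, Bint p i)) := by
  refine summable_of_ratio_norm_eventually_le (r := 1/2) (by norm_num) ?_
  have hB := B_tendsto hp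
  have hev : ∀ᶠ j in atTop, Bint p j ≤ 1/(2*(x*M+1)) := by
    refine (hB.eventually (eventually_le_nhds (by positivity))).mono (fun j hj => hj)
  filter_upwards [hev] with j hj
  have key : x^(j+1) * (M^(j+1+1) * ∏ i ∈ Finset.range (j+1), Bint p i)
      = (x * M * Bint p j) * (x^j * (M^(j+1) * ∏ i ∈ Finset.range j, Bint p i)) := by
    rw [Finset.prod_range_succ]
    ring
  rw [Real.norm_eq_abs, Real.norm_eq_abs, key, abs_mul]
  have habs : |x * M * Bint p j| ≤ 1/2 := by
    rw [abs_of_nonneg (mul_nonneg (mul_nonneg hx hM) (B_nonneg j))]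
    have h1 : x * M * Bint p j ≤ x * M * (1/(2*(x*M+1))) := by
      refine mul_le_mul_of_nonneg_left hj (mul_nonneg hx hM)
    refine le_trans h1 ?_
    have hpos : (0:ℝ) < 2*(x*M+1) := by positivity
    rw [mul_one_div, div_le_div_iff₀ hpos two_pos]
    nlinarith [mul_nonneg hx hM]
  exact mul_le_mul_of_nonneg_right habs (abs_nonneg _)


/-- if `κ(t) = h_p(t) κ₁(t)` with `p > 0`, `κ₁` continuous on
`[0,∞)`, and the power series `Σ a_j z^j` has non-zero radius of convergence,
then the convolution series `Σ_{j≥0} a_j κ^{<j+1>}(t)` converges for every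
`t > 0`, defines a function in `C_{-1}(0,∞)`, and, with `α = min{p,1}`, the
series `Σ_j a_j t^{1-α} κ^{<j+1>}(t)` converges uniformly on `[0,T]` for every
`T > 0`. -/
theorem convolution_series_converges (κ : ℝ → ℂ) (p : ℝ) (hp : 0 < p)
    (κ₁ : ℝ → ℂ) (hκ₁ : ContinuousOn κ₁ (Set.Ici 0))
    (hκ : ∀ t : ℝ, 0 < t → κ t = ((t ^ (p - 1) / Real.Gamma p : ℝ) : ℂ) * κ₁ t)
    (a : ℕ → ℂ) (ha : ∃ r : ℝ, 0 < r ∧ ∃ C : ℝ, ∀ j : ℕ, ‖a j‖ * r ^ j ≤ C) :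
    (∀ t : ℝ, 0 < t → Summable fun j : ℕ => a j * convPowC κ (j + 1) t) ∧
    Cm1C (fun t => ∑' j : ℕ, a j * convPowC κ (j + 1) t) ∧
    ∀ T : ℝ, 0 < T →
      TendstoUniformlyOn
        (fun N t => ∑ j ∈ Finset.range N,
          a j * ((t ^ (1 - min p 1) : ℝ) : ℂ) * convPowC κ (j + 1) t)
        (fun t => ∑' j : ℕ,
          a j * ((t ^ (1 - min p 1) : ℝ) : ℂ) * convPowC κ (j + 1) t)
        Filter.atTop (Set.Icc 0 T) := by

  obtain ⟨r, hr, C, hC⟩ := ha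
  set u : ℝ → ℂ := fun t => (((Real.Gamma p)⁻¹ : ℝ) : ℂ) * κ₁ t with hu_def
  have hu : ContinuousOn u (Set.Ici 0) := continuousOn_const.mul hκ₁
  have hκu : ∀ t : ℝ, 0 < t → κ t = ((t ^ (p-1) : ℝ) : ℂ) * u t := by
    intro t ht
    rw [hκ t ht, hu_def]
    push_cast [div_eq_mul_inv]
    ring
  have hC0 : 0 ≤ C := le_trans (by positivity) (hC 0)
  have haj : ∀ j : ℕ, ‖a j‖ ≤ C * (r⁻¹)^j := by
    intro j
    rw [inv_pow, ← div_eq_mul_inv, le_div_iff₀ (pow_pos hr j)]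
    exact hC j
  have getM : ∀ T : ℝ, 0 ≤ T → ∃ M : ℝ, 0 ≤ M ∧ ∀ s ∈ Set.Icc (0:ℝ) T, ‖u s‖ ≤ M := by
    intro T hT
    obtain ⟨M₀, hM₀⟩ := (isCompact_Icc (a := (0:ℝ)) (b := T)).exists_bound_of_continuousOn
      (hu.mono (fun x hx => hx.1))
    exact ⟨max M₀ 0, le_max_right _ _, fun s hs => le_trans (hM₀ s hs) (le_max_left _ _)⟩
  have texp : ∀ {t : ℝ}, 0 < t → ∀ j : ℕ,
      t ^ (((j:ℝ)+1)*p - 1) = t^(p-1) * (t^p)^j := by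
    intro t ht j
    rw [← Real.rpow_natCast (t^p) j, ← Real.rpow_mul ht.le, ← Real.rpow_add ht]
    congr 1
    ring
  -- the common summable bound
  have bnd : ∀ {T M : ℝ}, 0 ≤ T → 0 ≤ M → (∀ s ∈ Set.Icc (0:ℝ) T, ‖u s‖ ≤ M) →
      ∀ j : ℕ, ∀ t : ℝ, 0 < t → t ∈ Set.Icc (0:ℝ) T →
      ‖a j * convPowC κ (j+1) t‖
        ≤ (C * t^(p-1)) * ((t^p * r⁻¹)^j * (M^(j+1) * ∏ i ∈ Finset.range j, Bint p i)) := by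
    intro T M hT hM hMu j t ht htT
    rw [V_identity hp hκu j t ht]
    have hVb := V_bound hp hu hT hM hMu j t htT
    calc ‖a j * (((t ^ (((j:ℝ)+1)*p - 1) : ℝ) : ℂ) * Vop p u j t)‖
        = ‖a j‖ * (t ^ (((j:ℝ)+1)*p - 1) * ‖Vop p u j t‖) := by
          rw [norm_mul, norm_mul, Complex.norm_real, Real.norm_eq_abs,
            abs_of_nonneg (Real.rpow_nonneg ht.le _)]
      _ ≤ (C * (r⁻¹)^j) * (t ^ (((j:ℝ)+1)*p - 1)
            * (M^(j+1) * ∏ i ∈ Finset.range j, Bint p i)) := by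
          have h1 : (0:ℝ) ≤ t ^ (((j:ℝ)+1)*p - 1) := Real.rpow_nonneg ht.le _
          refine mul_le_mul (haj j) (mul_le_mul_of_nonneg_left hVb h1)
            (mul_nonneg h1 (norm_nonneg _)) (by positivity)
      _ = (C * t^(p-1)) * ((t^p * r⁻¹)^j * (M^(j+1) * ∏ i ∈ Finset.range j, Bint p i)) := by
          rw [texp ht j]
          ring
  refine ⟨?_, ?_, ?_⟩
  · -- summability
    intro t ht
    obtain ⟨M, hM0, hMu⟩ := getM t ht.le
    refine Summable.of_norm ?_
    refine Summable.of_nonneg_of_le (fun j => norm_nonneg _)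
      (fun j => bnd ht.le hM0 hMu j t ht ⟨le_refl 0 |>.trans ht.le, le_refl t⟩) ?_
    exact ((master_summable hp (mul_nonneg (Real.rpow_nonneg ht.le p) (inv_nonneg.mpr hr.le))
      hM0).mul_left _)
  · -- the C_{-1} property
    set F : ℝ → ℂ := fun t => ∑' j : ℕ, a j * (((t^p)^j : ℝ) : ℂ) * Vop p u j t with hF_def
    refine ⟨p - 1, by linarith, F, ?_, ?_⟩
    · -- continuity of F on Ici 0
      intro t₀ ht₀
      have ht₀' : (0:ℝ) ≤ t₀ := ht₀
      obtain ⟨M, hM0, hMu⟩ := getM (t₀+1) (by linarith)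
      have hsum : Summable (fun j : ℕ => C * (((t₀+1)^p * r⁻¹)^j
          * (M^(j+1) * ∏ i ∈ Finset.range j, Bint p i))) :=
        (master_summable hp (mul_nonneg (Real.rpow_nonneg (by linarith) p)
          (inv_nonneg.mpr hr.le)) hM0).mul_left _
      have hb : ∀ j : ℕ, ∀ t ∈ Set.Icc (0:ℝ) (t₀+1),
          ‖a j * (((t^p)^j : ℝ) : ℂ) * Vop p u j t‖
            ≤ C * (((t₀+1)^p * r⁻¹)^j * (M^(j+1) * ∏ i ∈ Finset.range j, Bint p i)) := by
        intro j t htI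
        have hVb := V_bound hp hu (by linarith : (0:ℝ) ≤ t₀+1) hM0 hMu j t htI
        have htp : t^p ≤ (t₀+1)^p := Real.rpow_le_rpow htI.1 htI.2 hp.le
        calc ‖a j * (((t^p)^j : ℝ) : ℂ) * Vop p u j t‖
            = ‖a j‖ * ((t^p)^j * ‖Vop p u j t‖) := by
              rw [norm_mul, norm_mul, Complex.norm_real, Real.norm_eq_abs,
                abs_of_nonneg (pow_nonneg (Real.rpow_nonneg htI.1 p) j), mul_assoc]
          _ ≤ (C * (r⁻¹)^j) * (((t₀+1)^p)^j * (M^(j+1) * ∏ i ∈ Finset.range j, Bint p i)) := by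
              have h1 : (0:ℝ) ≤ (t^p)^j := pow_nonneg (Real.rpow_nonneg htI.1 p) j
              refine mul_le_mul (haj j) ?_ (mul_nonneg h1 (norm_nonneg _)) (by positivity)
              exact mul_le_mul (pow_le_pow_left₀ (Real.rpow_nonneg htI.1 p) htp j) hVb
                (norm_nonneg _) (pow_nonneg (Real.rpow_nonneg (by linarith) p) j)
          _ = C * (((t₀+1)^p * r⁻¹)^j * (M^(j+1) * ∏ i ∈ Finset.range j, Bint p i)) := by
              ring
      have hUnif := tendstoUniformlyOn_tsum_nat hsum hb
      have hContPartial : ∀ N : ℕ, ContinuousOn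
          (fun t => ∑ j ∈ Finset.range N, a j * (((t^p)^j : ℝ) : ℂ) * Vop p u j t)
          (Set.Icc (0:ℝ) (t₀+1)) := by
        intro N
        refine continuousOn_finset_sum _ (fun j _ => ?_)
        have c0 : ContinuousOn (fun t : ℝ => t^p) (Set.Icc (0:ℝ) (t₀+1)) :=
          fun x _ => (Real.continuousAt_rpow_const x p (Or.inr hp.le)).continuousWithinAt
        have c1 : ContinuousOn (fun t : ℝ => (((t^p)^j : ℝ) : ℂ)) (Set.Icc (0:ℝ) (t₀+1)) :=
          Complex.continuous_ofReal.comp_continuousOn (c0.pow j)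
        exact (continuousOn_const.mul c1).mul ((V_cont hp hu j).mono (fun x hx => hx.1))
      have hF : ContinuousOn F (Set.Icc (0:ℝ) (t₀+1)) :=
        hUnif.continuousOn (Filter.Eventually.of_forall hContPartial).frequently
      refine (hF t₀ ⟨ht₀', by linarith⟩).mono_of_mem_nhdsWithin ?_
      rw [mem_nhdsWithin]
      exact ⟨Set.Iio (t₀+1), isOpen_Iio, by simpa using lt_add_one t₀,
        fun x hx => ⟨hx.2, le_of_lt hx.1⟩⟩
    · -- the factorization for t > 0
      intro t ht
      show ∑' j : ℕ, a j * convPowC κ (j+1) t = ((t ^ (p-1) : ℝ) : ℂ) * F t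
      rw [hF_def, ← tsum_mul_left]
      refine tsum_congr (fun j => ?_)
      rw [V_identity hp hκu j t ht]
      have : ((t ^ (((j:ℝ)+1)*p - 1) : ℝ) : ℂ)
          = ((t^(p-1) : ℝ) : ℂ) * (((t^p)^j : ℝ) : ℂ) := by
        rw [texp ht j]
        push_cast
        ring
      rw [this]
      ring
  · -- uniform convergence
    intro T hT
    set T' := max T 1 with hT'_def
    have hT'0 : (0:ℝ) ≤ T' := le_trans zero_le_one (le_max_right T 1)
    obtain ⟨M, hM0, hMu⟩ := getM T' hT'0
    have hαp : min p 1 ≤ p := min_le_left p 1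
    set w : ℕ → ℝ := fun j =>
      C * T'^(p - min p 1) * ((T'^p * r⁻¹)^j * (M^(j+1) * ∏ i ∈ Finset.range j, Bint p i))
      + (if j = 0 then ‖a 0‖ * ‖κ 0‖ else 0) with hw_def
    have hwsum : Summable w := by
      refine Summable.add ?_ ?_
      · exact ((master_summable hp (mul_nonneg (Real.rpow_nonneg hT'0 p)
          (inv_nonneg.mpr hr.le)) hM0).mul_left _)
      · exact (hasSum_ite_eq 0 (‖a 0‖ * ‖κ 0‖)).summable
    have hfirst_nonneg : ∀ j : ℕ, 0 ≤ C * T'^(p - min p 1)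
        * ((T'^p * r⁻¹)^j * (M^(j+1) * ∏ i ∈ Finset.range j, Bint p i)) := by
      intro j
      have := B_nonneg (p := p)
      refine mul_nonneg (mul_nonneg hC0 (Real.rpow_nonneg hT'0 _)) ?_
      refine mul_nonneg (pow_nonneg (mul_nonneg (Real.rpow_nonneg hT'0 p)
        (inv_nonneg.mpr hr.le)) j) ?_
      exact mul_nonneg (pow_nonneg hM0 _) (Finset.prod_nonneg (fun i _ => B_nonneg i))
    have hb : ∀ j : ℕ, ∀ t ∈ Set.Icc (0:ℝ) T,
        ‖a j * ((t ^ (1 - min p 1) : ℝ) : ℂ) * convPowC κ (j+1) t‖ ≤ w j := by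
      intro j t htI
      rcases eq_or_lt_of_le htI.1 with h0 | h0
      · -- t = 0
        subst h0
        have wnn : ∀ i : ℕ, (0:ℝ) ≤ (if i = 0 then ‖a 0‖ * ‖κ 0‖ else 0) := by
          intro i
          split
          · positivity
          · exact le_refl 0
        match j with
        | 0 =>
          have hcast : ‖(((0:ℝ) ^ (1 - min p 1) : ℝ) : ℂ)‖ ≤ 1 := by
            rw [Complex.norm_real, Real.norm_eq_abs,
              abs_of_nonneg (Real.zero_rpow_nonneg _)]
            exact Real.zero_rpow_le_one _
          have h1 : ‖a 0 * (((0:ℝ) ^ (1 - min p 1) : ℝ) : ℂ) * convPowC κ 1 0‖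
              ≤ ‖a 0‖ * ‖κ 0‖ := by
            have : convPowC κ 1 0 = κ 0 := rfl
            rw [norm_mul, norm_mul, this]
            calc ‖a 0‖ * ‖(((0:ℝ) ^ (1 - min p 1) : ℝ) : ℂ)‖ * ‖κ 0‖
                ≤ ‖a 0‖ * 1 * ‖κ 0‖ := by
                  refine mul_le_mul_of_nonneg_right
                    (mul_le_mul_of_nonneg_left hcast (norm_nonneg _)) (norm_nonneg _)
              _ = ‖a 0‖ * ‖κ 0‖ := by ring
          refine le_trans h1 ?_
          rw [hw_def]
          simp only [if_pos rfl]
          exact le_add_of_nonneg_left (hfirst_nonneg 0)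
        | (k+1) =>
          have hz : convPowC κ (k+2) 0 = 0 := by
            show convC κ (convPowC κ (k+1)) 0 = 0
            simp [convC]
          rw [hz, mul_zero, norm_zero]
          exact add_nonneg (hfirst_nonneg _) (wnn _)
      · -- 0 < t
        have htT' : t ∈ Set.Icc (0:ℝ) T' := ⟨htI.1, le_trans htI.2 (le_max_left T 1)⟩
        have hVb := V_bound hp hu hT'0 hM0 hMu j t htT'
        rw [V_identity hp hκu j t h0]
        have texp2 : t^(1 - min p 1) * t^(((j:ℝ)+1)*p - 1) = t^(p - min p 1) * (t^p)^j := by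
          rw [← Real.rpow_natCast (t^p) j, ← Real.rpow_mul h0.le, ← Real.rpow_add h0,
            ← Real.rpow_add h0]
          congr 1
          ring
        calc ‖a j * ((t ^ (1 - min p 1) : ℝ) : ℂ)
              * (((t ^ (((j:ℝ)+1)*p - 1) : ℝ) : ℂ) * Vop p u j t)‖
            = ‖a j‖ * ((t^(1 - min p 1) * t^(((j:ℝ)+1)*p - 1)) * ‖Vop p u j t‖) := by
              rw [norm_mul, norm_mul, norm_mul, Complex.norm_real, Complex.norm_real,
                Real.norm_eq_abs, Real.norm_eq_abs,
                abs_of_nonneg (Real.rpow_nonneg h0.le (1 - min p 1)),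
                abs_of_nonneg (Real.rpow_nonneg h0.le (((j:ℝ)+1)*p - 1))]
              ring
          _ = ‖a j‖ * ((t^(p - min p 1) * (t^p)^j) * ‖Vop p u j t‖) := by rw [texp2]
          _ ≤ (C * (r⁻¹)^j) * ((T'^(p - min p 1) * (T'^p)^j)
                * (M^(j+1) * ∏ i ∈ Finset.range j, Bint p i)) := by
              have e1 : t^(p - min p 1) ≤ T'^(p - min p 1) :=
                Real.rpow_le_rpow htI.1 htT'.2 (by linarith)
              have e2 : (t^p)^j ≤ (T'^p)^j :=
                pow_le_pow_left₀ (Real.rpow_nonneg htI.1 p)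
                  (Real.rpow_le_rpow htI.1 htT'.2 hp.le) j
              have h1 : (0:ℝ) ≤ t^(p - min p 1) * (t^p)^j :=
                mul_nonneg (Real.rpow_nonneg htI.1 _) (pow_nonneg (Real.rpow_nonneg htI.1 p) j)
              refine mul_le_mul (haj j) ?_ (mul_nonneg h1 (norm_nonneg _)) (by positivity)
              refine mul_le_mul (mul_le_mul e1 e2
                (pow_nonneg (Real.rpow_nonneg htI.1 p) j) (Real.rpow_nonneg hT'0 _)) hVb
                (norm_nonneg _) ?_
              exact mul_nonneg (Real.rpow_nonneg hT'0 _) (pow_nonneg (Real.rpow_nonneg hT'0 p) j)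
          _ = C * T'^(p - min p 1) * ((T'^p * r⁻¹)^j
                * (M^(j+1) * ∏ i ∈ Finset.range j, Bint p i)) := by ring
          _ ≤ w j := by
              rw [hw_def]
              refine le_add_of_nonneg_right ?_
              split <;> positivity
    exact tendstoUniformlyOn_tsum_nat hwsum hb
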